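/- Let F, G be unit-norm frames of ℝ² with three vectors each. Then F and G are equivalent if and only if FP_p(F) = FP_p(G) for p = 1, 2, 3, where FP_p(H) = ∑_{i<j} |⟨h_i,h_j⟩|^p. -/

import Mathlib

open scoped RealInnerProductSpace

/-- Two frames are equivalent when one is obtained from the other by a
composition of a common orthogonal transformation of `ℝ²`, a permutation of the
indices, and sign changes of individual vectors. -/
def FrameEquiv {k : ℕ} (f g : Fin k → EuclideanSpace ℝ (Fin 2)) : Prop :=
  ∃ (U : EuclideanSpace ℝ (Fin 2) ≃ₗᵢ[ℝ] EuclideanSpace ℝ (Fin 2))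
    (σ : Equiv.Perm (Fin k)) (ε : Fin k → ℝ),
      (∀ i, ε i = 1 ∨ ε i = -1) ∧ ∀ i, g i = ε i • U (f (σ i))

/-- The `p`-frame potential `FP_p(f) = ∑_{i<j} |⟨f i, f j⟩|^p`. -/
noncomputable def framePotential {k : ℕ} (p : ℕ)
    (f : Fin k → EuclideanSpace ℝ (Fin 2)) : ℝ :=
  ∑ q ∈ Finset.filter (fun q : Fin k × Fin k => q.1 < q.2) Finset.univ,
    |⟪f q.1, f q.2⟫| ^ p

namespace FramePotentialAux

open Real

noncomputable abbrev ES := EuclideanSpace ℝ (Fin 2)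

noncomputable def vec (θ : ℝ) : ES := !₂[Real.cos θ, Real.sin θ]

lemma inner_vec (θ θ' : ℝ) : ⟪vec θ, vec θ'⟫ = Real.cos (θ - θ') := by
  simp [PiLp.inner_apply, Fin.sum_univ_two, vec, Real.cos_sub, RCLike.inner_apply]
  ring

lemma exists_angle (v : ES) (hv : ‖v‖ = 1) : ∃ θ, v = vec θ := by
  have h2 : (v 0)^2 + (v 1)^2 = 1 := by
    have h := EuclideanSpace.norm_eq v
    rw [hv] at h
    have h' : Real.sqrt (∑ i, ‖v i‖^2) = 1 := h.symm
    have := congrArg (· ^ 2) h'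
    simp only [Real.sq_sqrt (by positivity : (0:ℝ) ≤ ∑ i, ‖v i‖^2)] at this
    simpa [Fin.sum_univ_two, Real.norm_eq_abs, sq_abs] using this
  set z : ℂ := ⟨v 0, v 1⟩ with hz
  have hzabs : ‖z‖ = 1 := by
    simp [Complex.norm_def, Complex.normSq, hz, Complex.normSq_mk]
    nlinarith [h2]
  have hzne : z ≠ 0 := by
    intro h0; rw [h0] at hzabs; simp at hzabs
  refine ⟨Complex.arg z, ?_⟩
  have hc := Complex.cos_arg hzne
  have hs := Complex.sin_arg z
  rw [hzabs] at hc hs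
  ext i
  fin_cases i
  · simpa [vec, hz] using hc.symm
  · simpa [vec, hz] using hs.symm

noncomputable def rotLI (t : ℝ) : ES →ₗᵢ[ℝ] ES where
  toLinearMap :=
  { toFun := fun v => !₂[Real.cos t * v 0 - Real.sin t * v 1,
                        Real.sin t * v 0 + Real.cos t * v 1]
    map_add' := by
      intro x y; ext i; fin_cases i <;>
        (simp [PiLp.add_apply]; ring)
    map_smul' := by
      intro c x; ext i; fin_cases i <;>
        (simp [PiLp.smul_apply, smul_eq_mul]; ring) }
  norm_map' := by
    intro v
    rw [EuclideanSpace.norm_eq, EuclideanSpace.norm_eq]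
    congr 1
    simp only [Fin.sum_univ_two, Real.norm_eq_abs, sq_abs]
    have := Real.sin_sq_add_cos_sq t
    simp only [LinearMap.coe_mk, AddHom.coe_mk]
    show (Real.cos t * v 0 - Real.sin t * v 1)^2 + (Real.sin t * v 0 + Real.cos t * v 1)^2
        = (v 0)^2 + (v 1)^2
    nlinarith [this]

noncomputable def conjLI : ES →ₗᵢ[ℝ] ES where
  toLinearMap :=
  { toFun := fun v => !₂[v 0, -v 1]
    map_add' := by intro x y; ext i; fin_cases i <;> (simp [PiLp.add_apply]; try ring)
    map_smul' := by
      intro c x; ext i; fin_cases i <;> (simp [PiLp.smul_apply, smul_eq_mul]; try ring) }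
  norm_map' := by
    intro v
    rw [EuclideanSpace.norm_eq, EuclideanSpace.norm_eq]
    congr 1
    simp [Fin.sum_univ_two]

noncomputable def rotIso (t : ℝ) : ES ≃ₗᵢ[ℝ] ES :=
  (rotLI t).toLinearIsometryEquiv rfl

noncomputable def conjIso : ES ≃ₗᵢ[ℝ] ES :=
  conjLI.toLinearIsometryEquiv rfl

lemma rotIso_vec (t θ : ℝ) : rotIso t (vec θ) = vec (θ + t) := by
  ext i
  show rotLI t (vec θ) i = _
  fin_cases i <;>
    (simp [rotLI, vec, Real.cos_add, Real.sin_add]; ring)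

lemma conjIso_vec (θ : ℝ) : conjIso (vec θ) = vec (-θ) := by
  ext i
  show conjLI (vec θ) i = _
  fin_cases i <;> simp [conjLI, vec]

lemma vec_add_int_pi (x : ℝ) (k : ℤ) :
    ∃ s : ℝ, (s = 1 ∨ s = -1) ∧ vec (x + k * π) = s • vec x := by
  refine ⟨(-1 : ℝ) ^ k, ?_, ?_⟩
  · rcases Int.even_or_odd k with h | h
    · left; exact h.neg_one_zpow
    · right; exact h.neg_one_zpow
  · ext i
    fin_cases i
    · show Real.cos (x + k * π) = ((-1 : ℝ)^k • vec x) 0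
      rw [show x + k * π = k * π - (-x) by ring, Real.cos_int_mul_pi_sub]
      simp [vec]
    · show Real.sin (x + k * π) = ((-1 : ℝ)^k • vec x) 1
      rw [show x + k * π = k * π - (-x) by ring, Real.sin_int_mul_pi_sub]
      simp [vec]

lemma abs_cos_eq (x y : ℝ) (h : |Real.cos x| = |Real.cos y|) :
    (∃ k : ℤ, x = y + k * π) ∨ (∃ k : ℤ, x = -y + k * π) := by
  have h2 : Real.cos (2*x) = Real.cos (2*y) := by
    rw [Real.cos_two_mul, Real.cos_two_mul]
    have := congrArg (fun z => 2 * z^2 - 1) h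
    simpa [sq_abs] using this
  rw [Real.cos_eq_cos_iff] at h2
  obtain ⟨k, hk | hk⟩ := h2
  · left; exact ⟨-k, by push_cast; linarith⟩
  · right; exact ⟨k, by push_cast; linarith⟩

lemma trig_core (a0 a1 a2 b0 b1 b2 : ℝ)
    (h01 : |Real.cos (a0 - a1)| = |Real.cos (b0 - b1)|)
    (h02 : |Real.cos (a0 - a2)| = |Real.cos (b0 - b2)|)
    (h12 : |Real.cos (a1 - a2)| = |Real.cos (b1 - b2)|) :
    ∃ e : ℝ, (e = 1 ∨ e = -1) ∧ ∃ t : ℝ,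
      (∃ k : ℤ, b0 = e * a0 + t + k * π) ∧
      (∃ k : ℤ, b1 = e * a1 + t + k * π) ∧
      (∃ k : ℤ, b2 = e * a2 + t + k * π) := by
  have c01 := abs_cos_eq _ _ h01
  have c02 := abs_cos_eq _ _ h02
  have c12 := abs_cos_eq _ _ h12
  rcases c01 with ⟨k1, hk1⟩ | ⟨k1, hk1⟩ <;> rcases c02 with ⟨k2, hk2⟩ | ⟨k2, hk2⟩
  · exact ⟨1, Or.inl rfl, b0 - a0, ⟨0, by ring⟩, ⟨k1, by push_cast; linarith⟩,
      ⟨k2, by push_cast; linarith⟩⟩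
  · rcases c12 with ⟨k3, hk3⟩ | ⟨k3, hk3⟩
    · exact ⟨1, Or.inl rfl, b0 - a0, ⟨0, by ring⟩, ⟨k1, by push_cast; linarith⟩,
        ⟨k1 + k3, by push_cast; linarith⟩⟩
    · exact ⟨-1, Or.inr rfl, b0 + a0, ⟨0, by ring⟩, ⟨k3 - k2, by push_cast; linarith⟩,
        ⟨-k2, by push_cast; linarith⟩⟩
  · rcases c12 with ⟨k3, hk3⟩ | ⟨k3, hk3⟩
    · exact ⟨1, Or.inl rfl, b0 - a0, ⟨0, by ring⟩, ⟨k2 - k3, by push_cast; linarith⟩,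
        ⟨k2, by push_cast; linarith⟩⟩
    · exact ⟨-1, Or.inr rfl, b0 + a0, ⟨0, by ring⟩, ⟨-k1, by push_cast; linarith⟩,
        ⟨-(k1 + k3), by push_cast; linarith⟩⟩
  · exact ⟨-1, Or.inr rfl, b0 + a0, ⟨0, by ring⟩, ⟨-k1, by push_cast; linarith⟩,
      ⟨-k2, by push_cast; linarith⟩⟩

lemma sym2_eq {a b a' b' : ℝ} (h1 : a + b = a' + b') (h2 : a * b = a' * b') :
    (a = a' ∧ b = b') ∨ (a = b' ∧ b = a') := by
  have key : (a' - a) * (a' - b) = 0 := by linear_combination h2 - a' * h1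
  rcases mul_eq_zero.mp key with h | h
  · left; constructor <;> linarith
  · right; constructor <;> linarith

lemma sym3_eq {a b c a' b' c' : ℝ} (h1 : a + b + c = a' + b' + c')
    (h2 : a*b + a*c + b*c = a'*b' + a'*c' + b'*c') (h3 : a*b*c = a'*b'*c') :
    (a = a' ∧ b = b' ∧ c = c') ∨ (a = a' ∧ b = c' ∧ c = b') ∨
    (a = b' ∧ b = a' ∧ c = c') ∨ (a = b' ∧ b = c' ∧ c = a') ∨
    (a = c' ∧ b = a' ∧ c = b') ∨ (a = c' ∧ b = b' ∧ c = a') := by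
  have key : (a' - a) * ((a' - b) * (a' - c)) = 0 := by
    linear_combination (-a'^2) * h1 + a' * h2 - h3
  rcases mul_eq_zero.mp key with h | h
  · have ha : a = a' := by linarith
    subst ha
    rcases sym2_eq (by linarith : b + c = b' + c')
        (by linear_combination h2 - a * h1 : b * c = b' * c') with
      ⟨hb, hc⟩ | ⟨hb, hc⟩
    · exact Or.inl ⟨rfl, hb, hc⟩
    · exact Or.inr (Or.inl ⟨rfl, hb, hc⟩)
  · rcases mul_eq_zero.mp h with h | h
    · have hb : b = a' := by linarith
      subst hb
      rcases sym2_eq (by linarith : a + c = b' + c')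
          (by linear_combination h2 - b * h1 : a * c = b' * c') with
        ⟨ha, hc⟩ | ⟨ha, hc⟩
      · exact Or.inr (Or.inr (Or.inl ⟨ha, rfl, hc⟩))
      · exact Or.inr (Or.inr (Or.inr (Or.inr (Or.inl ⟨ha, rfl, hc⟩))))
    · have hc : c = a' := by linarith
      subst hc
      rcases sym2_eq (by linarith : a + b = b' + c')
          (by linear_combination h2 - c * h1 : a * b = b' * c') with
        ⟨ha, hb⟩ | ⟨ha, hb⟩
      · exact Or.inr (Or.inr (Or.inr (Or.inl ⟨ha, hb, rfl⟩)))
      · exact Or.inr (Or.inr (Or.inr (Or.inr (Or.inr ⟨ha, hb, rfl⟩))))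

lemma pow_sums_sym3 {a b c a' b' c' : ℝ}
    (h1 : a + b + c = a' + b' + c')
    (h2 : a^2 + b^2 + c^2 = a'^2 + b'^2 + c'^2)
    (h3 : a^3 + b^3 + c^3 = a'^3 + b'^3 + c'^3) :
    (a = a' ∧ b = b' ∧ c = c') ∨ (a = a' ∧ b = c' ∧ c = b') ∨
    (a = b' ∧ b = a' ∧ c = c') ∨ (a = b' ∧ b = c' ∧ c = a') ∨
    (a = c' ∧ b = a' ∧ c = b') ∨ (a = c' ∧ b = b' ∧ c = a') := by
  have e2 : a*b + a*c + b*c = a'*b' + a'*c' + b'*c' := by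
    linear_combination ((a+b+c+a'+b'+c')/2) * h1 - h2/2
  have e3 : a*b*c = a'*b'*c' := by
    linear_combination (((a+b+c)^2+(a+b+c)*(a'+b'+c')+(a'+b'+c')^2)/6
      - (a'^2+b'^2+c'^2)/2) * h1 - ((a+b+c)/2)*h2 + h3/3
  exact sym3_eq h1 e2 e3

lemma framePotential_eq (p : ℕ) (f : Fin 3 → ES) :
    framePotential p f = |⟪f 0, f 1⟫|^p + |⟪f 0, f 2⟫|^p + |⟪f 1, f 2⟫|^p := by
  have hset : Finset.filter (fun q : Fin 3 × Fin 3 => q.1 < q.2) Finset.univ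
      = ({(0,1), (0,2), (1,2)} : Finset (Fin 3 × Fin 3)) := by decide
  rw [framePotential, hset]
  rw [Finset.sum_insert (by decide), Finset.sum_insert (by decide),
    Finset.sum_singleton]
  ring

lemma perm_pair_sum (h : Fin 3 → Fin 3 → ℝ) (hsymm : ∀ i j, h i j = h j i)
    (σ : Equiv.Perm (Fin 3)) :
    h (σ 0) (σ 1) + h (σ 0) (σ 2) + h (σ 1) (σ 2) = h 0 1 + h 0 2 + h 1 2 := by
  have key : ∀ j : Fin 3, j = 0 ∨ j = 1 ∨ j = 2 := by decide
  have e01 : σ 0 ≠ σ 1 := fun hh => absurd (σ.injective hh) (by decide)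
  have e02 : σ 0 ≠ σ 2 := fun hh => absurd (σ.injective hh) (by decide)
  have e12 : σ 1 ≠ σ 2 := fun hh => absurd (σ.injective hh) (by decide)
  rcases key (σ 0) with hσ0 | hσ0 | hσ0 <;>
    rcases key (σ 1) with hσ1 | hσ1 | hσ1 <;>
      rcases key (σ 2) with hσ2 | hσ2 | hσ2 <;>
    first
      | exact absurd (hσ0.trans hσ1.symm) e01
      | exact absurd (hσ0.trans hσ2.symm) e02
      | exact absurd (hσ1.trans hσ2.symm) e12
      | (rw [hσ0, hσ1, hσ2]; try linarith [hsymm 0 1, hsymm 0 2, hsymm 1 2])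

/-- The rigidity lemma: unit vectors with matching pairwise absolute inner
products are related by an isometry and sign changes. -/
lemma rigidity (f g : Fin 3 → ES) (hf1 : ∀ i, ‖f i‖ = 1) (hg1 : ∀ i, ‖g i‖ = 1)
    (h01 : |⟪f 0, f 1⟫| = |⟪g 0, g 1⟫|)
    (h02 : |⟪f 0, f 2⟫| = |⟪g 0, g 2⟫|)
    (h12 : |⟪f 1, f 2⟫| = |⟪g 1, g 2⟫|) :
    ∃ (U : ES ≃ₗᵢ[ℝ] ES) (ε : Fin 3 → ℝ),
      (∀ i, ε i = 1 ∨ ε i = -1) ∧ ∀ i, g i = ε i • U (f i) := by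
  choose a ha using fun i => exists_angle (f i) (hf1 i)
  choose b hb using fun i => exists_angle (g i) (hg1 i)
  rw [ha 0, ha 1, inner_vec, hb 0, hb 1, inner_vec] at h01
  rw [ha 0, ha 2, inner_vec, hb 0, hb 2, inner_vec] at h02
  rw [ha 1, ha 2, inner_vec, hb 1, hb 2, inner_vec] at h12
  obtain ⟨e, he, t, ⟨k0, hk0⟩, ⟨k1, hk1⟩, ⟨k2, hk2⟩⟩ :=
    trig_core _ _ _ _ _ _ h01 h02 h12
  suffices H : ∀ U : ES ≃ₗᵢ[ℝ] ES, (∀ θ, U (vec θ) = vec (e * θ + t)) →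
      ∃ (U : ES ≃ₗᵢ[ℝ] ES) (ε : Fin 3 → ℝ),
        (∀ i, ε i = 1 ∨ ε i = -1) ∧ ∀ i, g i = ε i • U (f i) by
    rcases he with he | he
    · exact H (rotIso t) (fun θ => by rw [rotIso_vec]; rw [he]; ring_nf)
    · exact H (conjIso.trans (rotIso t)) (fun θ => by
        simp only [LinearIsometryEquiv.trans_apply, conjIso_vec, rotIso_vec, he]
        ring_nf)
  intro U hU
  have key : ∀ i, ∃ s : ℝ, (s = 1 ∨ s = -1) ∧ g i = s • U (f i) := by
    intro i
    have hki : ∃ k : ℤ, b i = e * a i + t + k * π := by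
      fin_cases i
      · exact ⟨k0, hk0⟩
      · exact ⟨k1, hk1⟩
      · exact ⟨k2, hk2⟩
    obtain ⟨k, hk⟩ := hki
    obtain ⟨s, hs, hvec⟩ := vec_add_int_pi (e * a i + t) k
    exact ⟨s, hs, by rw [hb i, hk, hvec, ha i, hU]⟩
  choose ε hε1 hε2 using key
  exact ⟨U, ε, hε1, hε2⟩

end FramePotentialAux

open FramePotentialAux in
/-- Two unit-norm frames of `ℝ²` with three vectors each are equivalent if and
only if their `p`-frame potentials agree for `p = 1, 2, 3`. -/
theorem frameEquiv_iff_framePotential_123 (f g : Fin 3 → EuclideanSpace ℝ (Fin 2))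
    (hf1 : ∀ i, ‖f i‖ = 1) (hg1 : ∀ i, ‖g i‖ = 1)
    (hfspan : Submodule.span ℝ (Set.range f) = ⊤)
    (hgspan : Submodule.span ℝ (Set.range g) = ⊤) :
    FrameEquiv f g ↔
      ∀ p ∈ ({1, 2, 3} : Finset ℕ), framePotential p f = framePotential p g := by
  constructor
  · rintro ⟨U, σ, ε, hε, hgf⟩ p _
    have habs : ∀ i, |ε i| = 1 := fun i => by rcases hε i with h | h <;> simp [h]
    have hinner : ∀ i j, |⟪g i, g j⟫| = |⟪f (σ i), f (σ j)⟫| := by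
      intro i j
      rw [hgf i, hgf j, real_inner_smul_left, real_inner_smul_right,
        LinearIsometryEquiv.inner_map_map, abs_mul, abs_mul, habs, habs,
        one_mul, one_mul]
    rw [framePotential_eq, framePotential_eq]
    simp only [hinner]
    exact (perm_pair_sum (fun i j => |⟪f i, f j⟫|^p)
      (fun i j => by show |⟪f i, f j⟫|^p = |⟪f j, f i⟫|^p; rw [real_inner_comm]) σ).symm
  · intro hp
    have P1 := hp 1 (by simp)
    have P2 := hp 2 (by simp)
    have P3 := hp 3 (by simp)
    rw [framePotential_eq, framePotential_eq] at P1 P2 P3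
    simp only [pow_one] at P1
    have hcomm : ∀ u v : ES, |⟪u, v⟫| = |⟪v, u⟫| := fun u v => by
      rw [real_inner_comm]
    -- apply the symmetric-function lemma
    rcases pow_sums_sym3 P1 P2 P3 with
      ⟨e1, e2, e3⟩ | ⟨e1, e2, e3⟩ | ⟨e1, e2, e3⟩ | ⟨e1, e2, e3⟩ | ⟨e1, e2, e3⟩ | ⟨e1, e2, e3⟩
    · -- identity permutation
      obtain ⟨U, ε, hε, hU⟩ := rigidity f g hf1 hg1 e1 e2 e3
      exact ⟨U, Equiv.refl _, ε, hε, hU⟩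
    · -- σ = (0 1) : |f10|=a', |f12|=c'... case a=a', b=c', c=b'
      set σ : Equiv.Perm (Fin 3) := Equiv.swap 0 1 with hσ
      obtain ⟨U, ε, hε, hU⟩ := rigidity (f ∘ σ) g (fun i => hf1 _) hg1
        (by show |⟪f (σ 0), f (σ 1)⟫| = _
            rw [show σ 0 = 1 from rfl, show σ 1 = 0 from rfl, hcomm]; exact e1)
        (by show |⟪f (σ 0), f (σ 2)⟫| = _
            rw [show σ 0 = 1 from rfl, show σ 2 = 2 from rfl]; exact e3)
        (by show |⟪f (σ 1), f (σ 2)⟫| = _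
            rw [show σ 1 = 0 from rfl, show σ 2 = 2 from rfl]; exact e2)
      exact ⟨U, σ, ε, hε, hU⟩
    · -- case a=b', b=a', c=c' : σ = (1 2)
      set σ : Equiv.Perm (Fin 3) := Equiv.swap 1 2 with hσ
      obtain ⟨U, ε, hε, hU⟩ := rigidity (f ∘ σ) g (fun i => hf1 _) hg1
        (by show |⟪f (σ 0), f (σ 1)⟫| = _
            rw [show σ 0 = 0 from rfl, show σ 1 = 2 from rfl]; exact e2)
        (by show |⟪f (σ 0), f (σ 2)⟫| = _
            rw [show σ 0 = 0 from rfl, show σ 2 = 1 from rfl]; exact e1)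
        (by show |⟪f (σ 1), f (σ 2)⟫| = _
            rw [show σ 1 = 2 from rfl, show σ 2 = 1 from rfl, hcomm]; exact e3)
      exact ⟨U, σ, ε, hε, hU⟩
    · -- case a=b', b=c', c=a' : σ = (0↦1,1↦2,2↦0)
      set σ : Equiv.Perm (Fin 3) := Equiv.ofBijective ![1, 2, 0] (by decide) with hσ
      obtain ⟨U, ε, hε, hU⟩ := rigidity (f ∘ σ) g (fun i => hf1 _) hg1
        (by show |⟪f (σ 0), f (σ 1)⟫| = _
            rw [show σ 0 = 1 from rfl, show σ 1 = 2 from rfl]; exact e3)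
        (by show |⟪f (σ 0), f (σ 2)⟫| = _
            rw [show σ 0 = 1 from rfl, show σ 2 = 0 from rfl, hcomm]; exact e1)
        (by show |⟪f (σ 1), f (σ 2)⟫| = _
            rw [show σ 1 = 2 from rfl, show σ 2 = 0 from rfl, hcomm]; exact e2)
      exact ⟨U, σ, ε, hε, hU⟩
    · -- case a=c', b=a', c=b' : σ = (0↦2,1↦0,2↦1)
      set σ : Equiv.Perm (Fin 3) := Equiv.ofBijective ![2, 0, 1] (by decide) with hσ
      obtain ⟨U, ε, hε, hU⟩ := rigidity (f ∘ σ) g (fun i => hf1 _) hg1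
        (by show |⟪f (σ 0), f (σ 1)⟫| = _
            rw [show σ 0 = 2 from rfl, show σ 1 = 0 from rfl, hcomm]; exact e2)
        (by show |⟪f (σ 0), f (σ 2)⟫| = _
            rw [show σ 0 = 2 from rfl, show σ 2 = 1 from rfl, hcomm]; exact e3)
        (by show |⟪f (σ 1), f (σ 2)⟫| = _
            rw [show σ 1 = 0 from rfl, show σ 2 = 1 from rfl]; exact e1)
      exact ⟨U, σ, ε, hε, hU⟩
    · -- case a=c', b=b', c=a' : σ = (0 2)
      set σ : Equiv.Perm (Fin 3) := Equiv.swap 0 2 with hσ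
      obtain ⟨U, ε, hε, hU⟩ := rigidity (f ∘ σ) g (fun i => hf1 _) hg1
        (by show |⟪f (σ 0), f (σ 1)⟫| = _
            rw [show σ 0 = 2 from rfl, show σ 1 = 1 from rfl, hcomm]; exact e3)
        (by show |⟪f (σ 0), f (σ 2)⟫| = _
            rw [show σ 0 = 2 from rfl, show σ 2 = 0 from rfl, hcomm]; exact e2)
        (by show |⟪f (σ 1), f (σ 2)⟫| = _
            rw [show σ 1 = 1 from rfl, show σ 2 = 0 from rfl, hcomm]; exact e1)
      exact ⟨U, σ, ε, hε, hU⟩
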